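/- Let n ≥ 1 and 0 ≤ s ≤ n−1, and fix w ∈ ℂ. Then the s-th ∂̄-derivative in z of the polyanalytic Fock kernel of order n satisfies ∂̄_z^s F_n(z,w) = (−1)^s (z−w)^s e^{z·conj(w)} Σ_{u=0}^{n−s−1} ((−1)^u/u!) binom(n, u+s+1) |z−w|^{2u} for all z ∈ ℂ. In particular, for s = n−1, ∂̄_z^{n−1} F_n(z,w) = (−1)^{n−1} (z−w)^{n−1} e^{z·conj(w)}. -/

import Mathlib

/-- The Wirtinger (Cauchy–Riemann) operator `∂̄u(z) = (1/2)(∂u/∂x + i ∂u/∂y)`. -/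
noncomputable def dbar (u : ℂ → ℂ) (z : ℂ) : ℂ :=
  (1 / 2) * (fderiv ℝ u z 1 + Complex.I * fderiv ℝ u z Complex.I)

/-- The polyanalytic Fock kernel of order `n`:
`F_n(z,w) = e^{z w̄} Σ_{k=0}^{n−1} ((−1)^k/k!) C(n,k+1) |z−w|^{2k}`. -/
noncomputable def FockK (n : ℕ) (z w : ℂ) : ℂ :=
  Complex.exp (z * (starRingEnd ℂ) w) *
    ∑ k ∈ Finset.range n,
      ((-1) ^ k / (k.factorial : ℂ)) * (n.choose (k + 1)) * ((‖z - w‖ ^ (2 * k) : ℝ) : ℂ)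

lemma dbar_mul {u v : ℂ → ℂ} {z : ℂ} (hu : DifferentiableAt ℝ u z)
    (hv : DifferentiableAt ℝ v z) :
    dbar (fun z => u z * v z) z = dbar u z * v z + u z * dbar v z := by
  simp only [dbar, fderiv_fun_mul hu hv, ContinuousLinearMap.add_apply,
    ContinuousLinearMap.smul_apply, smul_eq_mul]
  ring

lemma dbar_holo {u : ℂ → ℂ} {z : ℂ} (h : DifferentiableAt ℂ u z) : dbar u z = 0 := by
  have h1 : fderiv ℝ u z = (fderiv ℂ u z).restrictScalars ℝ := h.fderiv_restrictScalars ℝ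
  have h2 : (fderiv ℂ u z) Complex.I = Complex.I * (fderiv ℂ u z) 1 := by
    have := (fderiv ℂ u z).map_smul Complex.I (1:ℂ)
    simp only [smul_eq_mul, one_mul] at this; rw [← this]; norm_num
  simp only [dbar, h1, ContinuousLinearMap.coe_restrictScalars', h2]
  ring_nf
  simp [Complex.I_sq]

lemma dbar_conj (z : ℂ) : dbar (fun z => (starRingEnd ℂ) z) z = 1 := by
  have : fderiv ℝ (fun z : ℂ => (starRingEnd ℂ) z) z
      = (Complex.conjCLE : ℂ ≃L[ℝ] ℂ).toContinuousLinearMap :=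
    Complex.conjCLE.fderiv
  simp only [dbar, this]
  simp [Complex.conjCLE_apply, Complex.conj_I]
  ring_nf

lemma diff_conj (z : ℂ) : DifferentiableAt ℝ (fun z : ℂ => (starRingEnd ℂ) z) z :=
  Complex.conjCLE.differentiableAt

lemma diff_conj_sub_pow (c : ℂ) (u : ℕ) (z : ℂ) :
    DifferentiableAt ℝ (fun z : ℂ => ((starRingEnd ℂ) z - c) ^ u) z :=
  ((diff_conj z).sub_const c).pow u

lemma diff_zw_pow (w : ℂ) (m : ℕ) (z : ℂ) :
    DifferentiableAt ℝ (fun z' : ℂ => (z' - w) ^ m) z := by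
  have h : DifferentiableAt ℂ (fun z' : ℂ => (z' - w) ^ m) z :=
    (differentiableAt_id.sub_const w).pow m
  exact h.restrictScalars ℝ

lemma dbar_conj_sub (c z : ℂ) : dbar (fun z => (starRingEnd ℂ) z - c) z = 1 := by
  have h := dbar_conj z
  simp only [dbar, fderiv_sub_const] at h ⊢
  exact h

lemma dbar_conj_pow (c : ℂ) (u : ℕ) (z : ℂ) :
    dbar (fun z => ((starRingEnd ℂ) z - c) ^ (u + 1)) z
      = (u + 1) * ((starRingEnd ℂ) z - c) ^ u := by
  induction u with
  | zero => simpa using dbar_conj_sub c z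
  | succ v ih =>
    have key := dbar_mul (diff_conj_sub_pow c (v+1) z) ((diff_conj z).sub_const c)
    have heq : (fun z : ℂ => ((starRingEnd ℂ) z - c) ^ (v + 1 + 1))
        = fun z : ℂ => ((starRingEnd ℂ) z - c) ^ (v + 1) * ((starRingEnd ℂ) z - c) := by
      funext z'; ring
    rw [heq, key, ih, dbar_conj_sub]
    push_cast
    ring

lemma dbar_sum {ι : Type*} (t : Finset ι) {f : ι → ℂ → ℂ} {z : ℂ}
    (h : ∀ i ∈ t, DifferentiableAt ℝ (f i) z) :
    dbar (fun z => ∑ i ∈ t, f i z) z = ∑ i ∈ t, dbar (f i) z := by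
  simp only [dbar, fderiv_fun_sum h, ContinuousLinearMap.sum_apply]
  rw [Finset.mul_sum, ← Finset.sum_add_distrib, Finset.mul_sum]

lemma norm_pow_eq (z w : ℂ) (k : ℕ) :
    ((‖z - w‖ ^ (2 * k) : ℝ) : ℂ)
      = (z - w) ^ k * ((starRingEnd ℂ) z - (starRingEnd ℂ) w) ^ k := by
  rw [pow_mul]
  push_cast
  rw [← map_sub, ← mul_pow]
  congr 1
  rw [Complex.mul_conj]
  norm_cast
  rw [Complex.normSq_eq_norm_sq]

/-- the intermediate closed form -/
noncomputable def P (n s : ℕ) (w : ℂ) (z : ℂ) : ℂ :=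
  (-1) ^ s * Complex.exp (z * (starRingEnd ℂ) w) *
    ∑ u ∈ Finset.range (n - s),
      ((-1) ^ u / (u.factorial : ℂ)) * (n.choose (u + s + 1)) *
        ((z - w) ^ (s + u) * ((starRingEnd ℂ) z - (starRingEnd ℂ) w) ^ u)

lemma dbar_P (n s : ℕ) (w : ℂ) (hs : s + 1 ≤ n) (z : ℂ) :
    dbar (P n s w) z = P n (s + 1) w z := by
  set cw := (starRingEnd ℂ) w with hcw
  have hrange : n - s = (n - (s+1)) + 1 := by omega
  have hterm : ∀ u ∈ Finset.range (n - s), DifferentiableAt ℝ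
      (fun z' : ℂ => ((-1:ℂ)^u / u.factorial) * (n.choose (u+s+1)) *
        ((z' - w)^(s+u) * ((starRingEnd ℂ) z' - cw)^u)) z := by
    intro u _
    exact (differentiableAt_const _).mul
      ((diff_zw_pow w (s+u) z).mul (diff_conj_sub_pow cw u z))
  have hP : P n s w = fun z' => ((-1:ℂ)^s * Complex.exp (z' * cw)) *
      (∑ u ∈ Finset.range (n-s), ((-1:ℂ)^u / u.factorial) * (n.choose (u+s+1)) *
        ((z' - w)^(s+u) * ((starRingEnd ℂ) z' - cw)^u)) := by
    funext z'; simp only [P, hcw]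
  rw [hP]
  have hhol : DifferentiableAt ℂ (fun z' : ℂ => (-1:ℂ)^s * Complex.exp (z' * cw)) z :=
    (differentiableAt_const _).mul ((differentiableAt_id.mul_const cw).cexp)
  have hsum_diff : DifferentiableAt ℝ (fun z' : ℂ =>
      ∑ u ∈ Finset.range (n-s), ((-1:ℂ)^u / u.factorial) * (n.choose (u+s+1)) *
        ((z' - w)^(s+u) * ((starRingEnd ℂ) z' - cw)^u)) z :=
    DifferentiableAt.fun_sum hterm
  rw [dbar_mul (hhol.restrictScalars ℝ) hsum_diff, dbar_holo hhol, zero_mul, zero_add]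
  rw [dbar_sum _ hterm]
  have hterm_val : ∀ u ∈ Finset.range (n-s),
      dbar (fun z' : ℂ => ((-1:ℂ)^u / u.factorial) * (n.choose (u+s+1)) *
        ((z' - w)^(s+u) * ((starRingEnd ℂ) z' - cw)^u)) z
      = ((-1:ℂ)^u / u.factorial) * (n.choose (u+s+1)) *
          ((z - w)^(s+u) * ((u:ℂ) * ((starRingEnd ℂ) z - cw)^(u-1))) := by
    intro u _
    have e : (fun z' : ℂ => ((-1:ℂ)^u / u.factorial) * (n.choose (u+s+1)) *
        ((z' - w)^(s+u) * ((starRingEnd ℂ) z' - cw)^u))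
        = fun z' => (((-1:ℂ)^u / u.factorial) * (n.choose (u+s+1)) * (z' - w)^(s+u)) *
            ((starRingEnd ℂ) z' - cw)^u := by
      funext z'; ring
    have hhol2 : DifferentiableAt ℂ (fun z' : ℂ =>
        ((-1:ℂ)^u / u.factorial) * (n.choose (u+s+1)) * (z' - w)^(s+u)) z :=
      (differentiableAt_const _).mul ((differentiableAt_id.sub_const w).pow _)
    rw [e, dbar_mul (hhol2.restrictScalars ℝ) (diff_conj_sub_pow cw u z), dbar_holo hhol2]
    cases u with
    | zero =>
      have e0 : (fun z' : ℂ => ((starRingEnd ℂ) z' - cw)^0) = fun _ => (1:ℂ) := by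
        funext z'; rw [pow_zero]
      rw [e0]
      simp [dbar]
    | succ v =>
      rw [dbar_conj_pow]
      push_cast
      ring
  rw [Finset.sum_congr rfl hterm_val]
  rw [hrange, Finset.sum_range_succ']
  have hzero : ((-1:ℂ)^0 / (Nat.factorial 0 : ℂ)) * (n.choose (0+s+1)) *
      ((z - w)^(s+0) * ((0:ℕ):ℂ) * ((starRingEnd ℂ) z - cw)^(0-1)) = 0 := by
    simp
  simp only [Nat.cast_zero, zero_mul, mul_zero, add_zero, pow_zero, Nat.factorial_zero]
  have hAB : ∀ v ∈ Finset.range (n - (s+1)),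
      ((-1:ℂ)^(v+1) / ((v+1).factorial : ℂ)) * (n.choose (v+1+s+1)) *
        ((z - w)^(s+(v+1)) * (((v+1:ℕ):ℂ) * ((starRingEnd ℂ) z - cw)^(v+1-1)))
      = (-1) * (((-1:ℂ)^v / (v.factorial : ℂ)) * (n.choose (v+(s+1)+1)) *
          ((z - w)^((s+1)+v) * ((starRingEnd ℂ) z - cw)^v)) := by
    intro v _
    have hv1 : ((v:ℂ) + 1) ≠ 0 := Nat.cast_add_one_ne_zero v
    have hfacne : ((v.factorial : ℂ)) ≠ 0 := Nat.cast_ne_zero.mpr v.factorial_ne_zero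
    have hfac : (((v+1).factorial : ℂ)) = ((v:ℂ)+1) * (v.factorial : ℂ) := by
      push_cast [Nat.factorial_succ]; ring
    have hch : n.choose (v + 1 + s + 1) = n.choose (v + (s+1) + 1) := by
      congr 1; omega
    have hpw : s + (v+1) = (s+1) + v := by omega
    rw [hfac, hch, hpw]
    simp only [Nat.add_sub_cancel]
    push_cast
    field_simp
    ring
  rw [Finset.sum_congr rfl hAB]
  simp only [neg_one_mul]
  rw [Finset.sum_neg_distrib]
  simp only [P]
  rw [pow_succ]
  ring

lemma P_eq (n s : ℕ) (w z : ℂ) :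
    P n s w z = (-1) ^ s * (z - w) ^ s * Complex.exp (z * (starRingEnd ℂ) w) *
      ∑ u ∈ Finset.range (n - s),
        ((-1) ^ u / (u.factorial : ℂ)) * (n.choose (u + s + 1)) *
          ((‖z - w‖ ^ (2 * u) : ℝ) : ℂ) := by
  simp only [P]
  have h : ∀ u ∈ Finset.range (n - s),
      ((-1:ℂ)^u / u.factorial) * (n.choose (u+s+1)) *
        ((z - w)^(s+u) * ((starRingEnd ℂ) z - (starRingEnd ℂ) w)^u)
      = (z - w)^s * (((-1:ℂ)^u / u.factorial) * (n.choose (u+s+1)) *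
          ((‖z - w‖ ^ (2*u) : ℝ) : ℂ)) := by
    intro u _
    rw [norm_pow_eq, pow_add]
    ring
  rw [Finset.sum_congr rfl h, ← Finset.mul_sum]
  ring

theorem stmt_15 (n : ℕ) (hn : 1 ≤ n) (s : ℕ) (hs : s ≤ n - 1) (w : ℂ) :
    (∀ z : ℂ, dbar^[s] (fun z' => FockK n z' w) z =
      (-1) ^ s * (z - w) ^ s * Complex.exp (z * (starRingEnd ℂ) w) *
        ∑ u ∈ Finset.range (n - s),
          ((-1) ^ u / (u.factorial : ℂ)) * (n.choose (u + s + 1)) *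
            ((‖z - w‖ ^ (2 * u) : ℝ) : ℂ)) ∧
    (∀ z : ℂ, dbar^[n - 1] (fun z' => FockK n z' w) z =
      (-1) ^ (n - 1) * (z - w) ^ (n - 1) * Complex.exp (z * (starRingEnd ℂ) w)) := by
  have key : ∀ t : ℕ, t ≤ n - 1 → ∀ z : ℂ,
      dbar^[t] (fun z' => FockK n z' w) z = P n t w z := by
    intro t
    induction t with
    | zero =>
      intro _ z
      simp only [Function.iterate_zero, id_eq]
      simp only [FockK, P, Nat.sub_zero, pow_zero, one_mul, zero_add, add_zero]
      congr 1
      refine Finset.sum_congr rfl fun k _ => ?_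
      rw [norm_pow_eq]
    | succ t ih =>
      intro hts z
      rw [Function.iterate_succ_apply']
      have hfun : dbar^[t] (fun z' => FockK n z' w) = P n t w :=
        funext (ih (by omega))
      rw [hfun]
      exact dbar_P n t w (by omega) z
  constructor
  · intro z
    rw [key s hs z, P_eq]
  · intro z
    rw [key (n-1) le_rfl z, P_eq]
    have h1 : n - (n - 1) = 1 := by omega
    rw [h1, Finset.sum_range_one]
    have h2 : 0 + (n - 1) + 1 = n := by omega
    rw [h2, Nat.choose_self]
    norm_num
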